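/- Let X be a measurable space, π a probability measure on X, and h : X → ℝ a bounded measurable function; write h̄ := h − π(h) and ‖h̄‖_∞ := sup_x |h̄(x)|. Let X_b be an X-valued random variable with law μ, let V be a square-integrable real random variable on the same probability space, and set Z_b := h(X_b) + V. Then |Var(Z_b) − Var_{X∼π}(h(X))| ≤ ‖h̄‖_∞² ‖μ − π‖_tv + 2 ‖h̄‖_∞ (E[V²])^{1/2} + E[V²]. -/

import Mathlib

open MeasureTheory ProbabilityTheory

/-- Total variation distance between two measures:
`sup { |μ(f) − ν(f)| : f measurable, |f| ≤ 1 }` (twice the usual TV). -/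
noncomputable def tvDist {X : Type*} [MeasurableSpace X] (μ ν : Measure X) : ℝ :=
  sSup {d : ℝ | ∃ f : X → ℝ, Measurable f ∧ (∀ x, |f x| ≤ 1) ∧
    d = |(∫ x, f x ∂μ) - ∫ x, f x ∂ν|}


lemma integrable_of_bound' {α : Type*} [MeasurableSpace α] (ν : Measure α) [IsFiniteMeasure ν]
    (f : α → ℝ) (hf : Measurable f) (C : ℝ) (hC : ∀ x, |f x| ≤ C) : Integrable f ν :=
  ⟨hf.aestronglyMeasurable, HasFiniteIntegral.of_bounded (C := C)
    (ae_of_all _ fun x => by simpa using hC x)⟩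

lemma abs_sub_le_tvDist {X : Type*} [MeasurableSpace X] (μ ν : Measure X)
    [IsFiniteMeasure μ] [IsFiniteMeasure ν] {f : X → ℝ} (hf : Measurable f)
    (hb : ∀ x, |f x| ≤ 1) : |(∫ x, f x ∂μ) - ∫ x, f x ∂ν| ≤ tvDist μ ν := by
  apply le_csSup
  · refine ⟨(μ Set.univ).toReal + (ν Set.univ).toReal, ?_⟩
    rintro d ⟨f', hf', hb', rfl⟩
    have h1 : ‖∫ x, f' x ∂μ‖ ≤ 1 * (μ Set.univ).toReal :=
      norm_integral_le_of_norm_le_const (ae_of_all _ fun x => by simpa using hb' x)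
    have h2 : ‖∫ x, f' x ∂ν‖ ≤ 1 * (ν Set.univ).toReal :=
      norm_integral_le_of_norm_le_const (ae_of_all _ fun x => by simpa using hb' x)
    rw [Real.norm_eq_abs] at h1 h2
    have := abs_sub (∫ x, f' x ∂μ) (∫ x, f' x ∂ν)
    linarith [this]
  · exact ⟨f, hf, hb, rfl⟩

lemma tvDist_nonneg {X : Type*} [MeasurableSpace X] (μ ν : Measure X)
    [IsFiniteMeasure μ] [IsFiniteMeasure ν] : 0 ≤ tvDist μ ν := by
  have := abs_sub_le_tvDist μ ν (f := fun _ => 0) measurable_const (fun x => by simp)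
  simpa using this

lemma cauchy_schwarz_int {α : Type*} [MeasurableSpace α] {ν : Measure α} {f g : α → ℝ}
    (hf : MemLp f 2 ν) (hg : MemLp g 2 ν) :
    |∫ x, f x * g x ∂ν| ≤ Real.sqrt (∫ x, f x ^ 2 ∂ν) * Real.sqrt (∫ x, g x ^ 2 ∂ν) := by
  have h1 : |∫ x, f x * g x ∂ν| ≤ ∫ x, |f x| * |g x| ∂ν := by
    calc |∫ x, f x * g x ∂ν| ≤ ∫ x, ‖f x * g x‖ ∂ν := by simpa using norm_integral_le_integral_norm (fun x => f x * g x)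
    _ = ∫ x, |f x| * |g x| ∂ν := by simp [abs_mul]
  have hpq : Real.HolderConjugate 2 2 := Real.HolderConjugate.two_two
  have hf2 : MemLp (fun x => |f x|) (ENNReal.ofReal 2) ν := by
    rw [ENNReal.ofReal_ofNat]; exact hf.abs
  have hg2 : MemLp (fun x => |g x|) (ENNReal.ofReal 2) ν := by
    rw [ENNReal.ofReal_ofNat]; exact hg.abs
  have h2 := integral_mul_le_Lp_mul_Lq_of_nonneg hpq
    (ae_of_all _ fun x => abs_nonneg (f x)) (ae_of_all _ fun x => abs_nonneg (g x)) hf2 hg2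
  have hfe : ∫ x, |f x| ^ (2:ℝ) ∂ν = ∫ x, f x ^ 2 ∂ν := by
    congr 1; ext x; rw [show ((2:ℝ)) = ((2:ℕ):ℝ) by norm_num, Real.rpow_natCast, sq_abs]
  have hge : ∫ x, |g x| ^ (2:ℝ) ∂ν = ∫ x, g x ^ 2 ∂ν := by
    congr 1; ext x; rw [show ((2:ℝ)) = ((2:ℕ):ℝ) by norm_num, Real.rpow_natCast, sq_abs]
  rw [hfe, hge] at h2
  calc |∫ x, f x * g x ∂ν| ≤ ∫ x, |f x| * |g x| ∂ν := h1
  _ ≤ (∫ x, f x ^ 2 ∂ν) ^ ((1:ℝ)/2) * (∫ x, g x ^ 2 ∂ν) ^ ((1:ℝ)/2) := h2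
  _ = Real.sqrt (∫ x, f x ^ 2 ∂ν) * Real.sqrt (∫ x, g x ^ 2 ∂ν) := by
    rw [Real.sqrt_eq_rpow, Real.sqrt_eq_rpow]

set_option maxHeartbeats 1000000 in
lemma core_ineq {X : Type*} [MeasurableSpace X] (μ π : Measure X)
    [IsProbabilityMeasure μ] [IsProbabilityMeasure π] (g : X → ℝ) (hg : Measurable g)
    (K : ℝ) (hKb : ∀ x, |g x| ≤ K) (hgπ : ∫ x, g x ∂π = 0) :
    (∫ x, g x ^ 2 ∂π) - (∫ x, g x ^ 2 ∂μ) + (∫ x, g x ∂μ) ^ 2 ≤ K ^ 2 * tvDist μ π := by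
  -- X is nonempty
  have hne : Nonempty X := by
    by_contra hX
    have h1 : (μ : Measure X) Set.univ = 1 := measure_univ
    rw [Set.univ_eq_empty_iff.2 (not_nonempty_iff.1 hX), measure_empty] at h1
    exact zero_ne_one h1
  obtain ⟨x₀⟩ := hne
  have hK0 : 0 ≤ K := le_trans (abs_nonneg _) (hKb x₀)
  have hs0 : 0 ≤ tvDist μ π := tvDist_nonneg μ π
  set s := tvDist μ π with hs
  -- integrability facts
  have hIg : ∀ (ν : Measure X) [IsProbabilityMeasure ν], Integrable g ν := by
    intro ν _; exact integrable_of_bound' ν g hg K hKb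
  have hIg2 : ∀ (ν : Measure X) [IsProbabilityMeasure ν], Integrable (fun x => g x ^ 2) ν := by
    intro ν _
    refine integrable_of_bound' ν _ (hg.pow_const 2) (K ^ 2) (fun x => ?_)
    rw [abs_pow]
    exact pow_le_pow_left₀ (abs_nonneg _) (hKb x) 2
  rcases eq_or_lt_of_le hK0 with hK | hK
  · -- K = 0 : g ≡ 0
    have hg0 : g = fun _ => 0 := by
      funext x; have := hKb x; rw [← hK] at this
      exact abs_nonpos_iff.1 this
    simp [hg0]
    positivity
  -- K > 0
  set a := ∫ x, g x ∂μ with ha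
  -- F1 : |a| ≤ K * s
  have hF1 : |a| ≤ K * s := by
    have hb : ∀ x, |g x / K| ≤ 1 := fun x => by
      rw [abs_div, abs_of_pos hK, div_le_one hK]; exact hKb x
    have := abs_sub_le_tvDist μ π (hg.div_const K) hb
    rw [integral_div, integral_div, hgπ, ← ha] at this
    simp only [zero_div, sub_zero, abs_div, abs_of_pos hK] at this
    calc |a| = |a| / K * K := by field_simp
    _ ≤ s * K := by apply mul_le_mul_of_nonneg_right this hK0
    _ = K * s := mul_comm _ _
  -- Jensen : a^2 ≤ ∫ g^2 dμ
  have hJen : a ^ 2 ≤ ∫ x, g x ^ 2 ∂μ := by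
    have h0 : 0 ≤ ∫ x, (g x - a) ^ 2 ∂μ := integral_nonneg fun x => sq_nonneg _
    have hexp : ∫ x, (g x - a) ^ 2 ∂μ = (∫ x, g x ^ 2 ∂μ) - 2 * a * a + a ^ 2 := by
      have : (fun x => (g x - a) ^ 2) = fun x => g x ^ 2 - 2 * a * g x + a ^ 2 := by
        funext x; ring
      rw [this, integral_add, integral_sub, integral_const_mul, integral_const]
      · simp [← ha]
      · exact hIg2 μ
      · exact (hIg μ).const_mul _
      · exact ((hIg2 μ).sub ((hIg μ).const_mul _))
      · exact integrable_const _
    nlinarith [h0, hexp]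
  -- bound on ∫ g^2 dπ
  have hπK : ∫ x, g x ^ 2 ∂π ≤ K ^ 2 := by
    calc ∫ x, g x ^ 2 ∂π ≤ ∫ _x, K ^ 2 ∂π := by
          apply integral_mono (hIg2 π) (integrable_const _)
          intro x
          show g x ^ 2 ≤ K ^ 2
          have h2 := pow_le_pow_left₀ (abs_nonneg (g x)) (hKb x) 2
          rwa [sq_abs] at h2
    _ = K ^ 2 := by simp
  -- F3 : test function family
  have hF3 : ∀ θ : ℝ, |θ| ≤ 2 * K →
      (∫ x, g x ^ 2 ∂π) - (∫ x, g x ^ 2 ∂μ) + θ * a ≤ (K + |θ| / 2) ^ 2 / 2 * s := by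
    intro θ hθ
    set N := (K + |θ| / 2) ^ 2 / 2 with hN
    have hNpos : 0 < N := by positivity
    set c := (K ^ 2 + |θ| * K - θ ^ 2 / 4) / 2 with hc
    set f := fun x => (g x ^ 2 - θ * g x - c) / N with hf
    have hfm : Measurable f := (((hg.pow_const 2).sub (hg.const_mul θ)).sub measurable_const).div_const N
    have hfb : ∀ x, |f x| ≤ 1 := by
      intro x
      rw [hf]
      simp only
      rw [abs_div, abs_of_pos hNpos, div_le_one hNpos]
      have h1 : |g x| ≤ K := hKb x
      have hlow : -(θ ^ 2) / 4 ≤ g x ^ 2 - θ * g x := by nlinarith [sq_nonneg (g x - θ / 2)]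
      have hup : g x ^ 2 - θ * g x ≤ K ^ 2 + |θ| * K := by
        have h2 : g x ^ 2 ≤ K ^ 2 := by nlinarith [sq_abs (g x), abs_nonneg (g x)]
        have h3 : -(θ * g x) ≤ |θ| * K := by
          calc -(θ * g x) ≤ |θ * g x| := neg_le_abs _
          _ = |θ| * |g x| := abs_mul _ _
          _ ≤ |θ| * K := by apply mul_le_mul_of_nonneg_left h1 (abs_nonneg _)
        linarith
      rw [abs_le]
      constructor <;> [skip; skip] <;> (rw [hN, hc]; nlinarith [hlow, hup, sq_abs θ])
    have htv := abs_sub_le_tvDist μ π hfm hfb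
    have hint : ∀ (ν : Measure X) [IsProbabilityMeasure ν],
        ∫ x, f x ∂ν = ((∫ x, g x ^ 2 ∂ν) - θ * (∫ x, g x ∂ν) - c) / N := by
      intro ν _
      rw [hf]
      simp only
      rw [integral_div, integral_sub, integral_sub, integral_const_mul, integral_const]
      · simp
      · exact hIg2 ν
      · exact (hIg ν).const_mul θ
      · exact (hIg2 ν).sub ((hIg ν).const_mul θ)
      · exact integrable_const _
    rw [hint μ, hint π, hgπ, ← ha] at htv
    have key : ((∫ x, g x ^ 2 ∂π) - (∫ x, g x ^ 2 ∂μ) + θ * a) / N ≤ s := by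
      have : ((∫ x, g x ^ 2 ∂π) - θ * 0 - c) / N - ((∫ x, g x ^ 2 ∂μ) - θ * a - c) / N
          = ((∫ x, g x ^ 2 ∂π) - (∫ x, g x ^ 2 ∂μ) + θ * a) / N := by ring
      calc ((∫ x, g x ^ 2 ∂π) - (∫ x, g x ^ 2 ∂μ) + θ * a) / N
          = -(((∫ x, g x ^ 2 ∂μ) - θ * a - c) / N - ((∫ x, g x ^ 2 ∂π) - θ * 0 - c) / N) := by
            rw [← this]; ring
      _ ≤ |((∫ x, g x ^ 2 ∂μ) - θ * a - c) / N - ((∫ x, g x ^ 2 ∂π) - θ * 0 - c) / N| := by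
            exact neg_le_abs _
      _ ≤ s := htv
    calc (∫ x, g x ^ 2 ∂π) - (∫ x, g x ^ 2 ∂μ) + θ * a
        = ((∫ x, g x ^ 2 ∂π) - (∫ x, g x ^ 2 ∂μ) + θ * a) / N * N := by field_simp
    _ ≤ s * N := mul_le_mul_of_nonneg_right key hNpos.le
    _ = N * s := mul_comm _ _
  -- now the case analysis
  set xπ := ∫ x, g x ^ 2 ∂π with hxπ
  set xμ := ∫ x, g x ^ 2 ∂μ with hxμ
  clear_value s a xπ xμ
  by_cases hs1 : 1 ≤ s
  · nlinarith [hJen, hπK, sq_nonneg K]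
  push_neg at hs1
  by_cases hsmall : |a| ≤ K * s / 2
  · have h0 := hF3 0 (by rw [abs_zero]; linarith)
    simp only [abs_zero, zero_div, add_zero, zero_mul] at h0
    nlinarith [sq_abs a, abs_nonneg a, hK, hs0, mul_nonneg hK0 hs0]
  · push_neg at hsmall
    have hspos : 0 < s := by
      rcases lt_or_ge 0 s with h | h
      · exact h
      · exfalso
        have : s = 0 := le_antisymm h hs0
        rw [this] at hF1 hsmall
        nlinarith [hF1, hsmall]
    set θ := 4 * |a| / s - 2 * K with hθdef
    have hθ0 : 0 ≤ θ := by
      rw [hθdef]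
      have : 2 * K * s < 4 * |a| := by nlinarith
      rw [sub_nonneg, le_div_iff₀ hspos]
      nlinarith
    have hθ2K : θ ≤ 2 * K := by
      rw [hθdef, sub_le_iff_le_add, div_le_iff₀ hspos]
      nlinarith [hF1]
    -- apply F3 with sign adjustment
    have hkey : xπ - xμ + θ * |a| ≤ (K + θ / 2) ^ 2 / 2 * s := by
      rcases le_or_gt 0 a with hA | hA
      · have := hF3 θ (by rw [abs_of_nonneg hθ0]; exact hθ2K)
        rw [abs_of_nonneg hθ0] at this
        rwa [abs_of_nonneg hA]
      · have := hF3 (-θ) (by rw [abs_neg, abs_of_nonneg hθ0]; exact hθ2K)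
        rw [abs_neg, abs_of_nonneg hθ0] at this
        rw [abs_of_neg hA]
        calc xπ - xμ + θ * -a = xπ - xμ + (-θ) * a := by ring
        _ ≤ (K + θ / 2) ^ 2 / 2 * s := this
    -- K + θ/2 = 2|a|/s
    have hKθ : K + θ / 2 = 2 * |a| / s := by
      rw [hθdef]; field_simp; ring
    rw [hKθ] at hkey
    -- multiply out and finish
    have hmul := mul_le_mul_of_nonneg_right hkey hspos.le
    have hexp : (2 * |a| / s) ^ 2 / 2 * s * s = 2 * |a| ^ 2 := by
      field_simp
    rw [hexp] at hmul
    -- hmul : (xπ - xμ + θ|a|) * s ≤ 2|a|²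
    have hθa : θ * |a| * s = 4 * |a| ^ 2 - 2 * K * |a| * s := by
      rw [hθdef]
      field_simp
    have hfin : (xπ - xμ) * s ≤ -2 * |a| ^ 2 + 2 * K * |a| * s := by nlinarith [hmul, hθa]
    have hgoal : (xπ - xμ + a ^ 2) * s ≤ K ^ 2 * s * s := by
      have h2 : a ^ 2 = |a| ^ 2 := (sq_abs a).symm
      nlinarith [sq_nonneg (K * s - |a|), sq_abs a, hs1, sq_nonneg a, hspos]
    nlinarith [hgoal, hspos]

lemma sq_integral_diff_le {X : Type*} [MeasurableSpace X] (μ π : Measure X)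
    [IsProbabilityMeasure μ] [IsProbabilityMeasure π] (g : X → ℝ) (hg : Measurable g)
    (K : ℝ) (hK0 : 0 ≤ K) (hKb : ∀ x, |g x| ≤ K) :
    |(∫ x, g x ^ 2 ∂μ) - ∫ x, g x ^ 2 ∂π| ≤ K ^ 2 * tvDist μ π := by
  have hs0 : 0 ≤ tvDist μ π := tvDist_nonneg μ π
  rcases eq_or_lt_of_le hK0 with hK | hK
  · have hg0 : g = fun _ => 0 := by
      funext x; have := hKb x; rw [← hK] at this
      exact abs_nonpos_iff.1 this
    simp [hg0]
    exact mul_nonneg (by positivity) hs0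
  · have hIg2 : ∀ (ν : Measure X) [IsProbabilityMeasure ν], Integrable (fun x => g x ^ 2) ν := by
      intro ν _
      refine integrable_of_bound' ν _ (hg.pow_const 2) (K ^ 2) (fun x => ?_)
      rw [abs_pow]
      exact pow_le_pow_left₀ (abs_nonneg _) (hKb x) 2
    set N := K ^ 2 / 2 with hN
    have hNpos : 0 < N := by positivity
    set f := fun x => (g x ^ 2 - N) / N with hf
    have hfm : Measurable f := ((hg.pow_const 2).sub measurable_const).div_const N
    have hfb : ∀ x, |f x| ≤ 1 := by
      intro x
      rw [hf]
      simp only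
      rw [abs_div, abs_of_pos hNpos, div_le_one hNpos]
      have h1 : 0 ≤ g x ^ 2 := sq_nonneg _
      have h2 : g x ^ 2 ≤ K ^ 2 := by
        have := pow_le_pow_left₀ (abs_nonneg (g x)) (hKb x) 2
        rwa [sq_abs] at this
      rw [abs_le, hN]
      constructor <;> nlinarith
    have htv := abs_sub_le_tvDist μ π hfm hfb
    have hint : ∀ (ν : Measure X) [IsProbabilityMeasure ν],
        ∫ x, f x ∂ν = ((∫ x, g x ^ 2 ∂ν) - N) / N := by
      intro ν _
      rw [hf]
      simp only
      rw [integral_div, integral_sub (hIg2 ν) (integrable_const _), integral_const]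
      simp
    rw [hint μ, hint π] at htv
    have heq : ((∫ x, g x ^ 2 ∂μ) - N) / N - ((∫ x, g x ^ 2 ∂π) - N) / N
        = ((∫ x, g x ^ 2 ∂μ) - ∫ x, g x ^ 2 ∂π) / N := by ring
    rw [heq, abs_div, abs_of_pos hNpos, div_le_iff₀ hNpos] at htv
    calc |(∫ x, g x ^ 2 ∂μ) - ∫ x, g x ^ 2 ∂π| ≤ tvDist μ π * N := htv
    _ = K ^ 2 / 2 * tvDist μ π := by rw [hN]; ring
    _ ≤ K ^ 2 * tvDist μ π := by nlinarith [sq_nonneg K]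


set_option maxHeartbeats 1000000 in
/-- **Lemma C.2 of the CCBPF paper (abstract form).**
If `Xb` has law `μ`, `V` is square integrable and `Z_b = h(Xb) + V`, then
`|Var(Z_b) − Var_{X∼π}(h(X))| ≤ ‖h̄‖_∞² ‖μ − π‖_tv + 2‖h̄‖_∞ (E[V²])^{1/2} + E[V²]`
where `h̄ = h − π(h)`. -/
theorem ccbpf_variance_comparison
    {X : Type*} [MeasurableSpace X]
    (π : Measure X) [IsProbabilityMeasure π]
    (h : X → ℝ) (hmeas : Measurable h) (hbdd : ∃ M : ℝ, ∀ x, |h x| ≤ M)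
    {Ω : Type*} [MeasurableSpace Ω] (P : Measure Ω) [IsProbabilityMeasure P]
    (Xb : Ω → X) (hXb : Measurable Xb)
    (μ : Measure X) (hμ : P.map Xb = μ)
    (V : Ω → ℝ) (hV : MemLp V 2 P) :
    |variance (fun ω => h (Xb ω) + V ω) P -
        ((∫ x, h x ^ 2 ∂π) - (∫ x, h x ∂π) ^ 2)| ≤
      (⨆ x : X, |h x - ∫ x', h x' ∂π|) ^ 2 * tvDist μ π +
        2 * (⨆ x : X, |h x - ∫ x', h x' ∂π|) * Real.sqrt (∫ ω, V ω ^ 2 ∂P) +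
        ∫ ω, V ω ^ 2 ∂P := by
  obtain ⟨M, hM⟩ := hbdd
  haveI hμprob : IsProbabilityMeasure μ := hμ ▸ Measure.isProbabilityMeasure_map hXb.aemeasurable
  -- X is nonempty
  have hne : Nonempty X := by
    by_contra hX
    have h1 : (μ : Measure X) Set.univ = 1 := measure_univ
    rw [Set.univ_eq_empty_iff.2 (not_nonempty_iff.1 hX), measure_empty] at h1
    exact zero_ne_one h1
  obtain ⟨x₀⟩ := hne
  have hM0 : 0 ≤ M := le_trans (abs_nonneg _) (hM x₀)
  set c := ∫ x', h x' ∂π with hc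
  set g : X → ℝ := fun x => h x - c with hg
  have hgm : Measurable g := hmeas.sub measurable_const
  have hbdd2 : BddAbove (Set.range fun x => |h x - c|) := by
    refine ⟨M + |c|, ?_⟩
    rintro _ ⟨x, rfl⟩
    calc |h x - c| ≤ |h x| + |c| := abs_sub _ _
    _ ≤ M + |c| := by linarith [hM x]
  set K := ⨆ x : X, |h x - c| with hK
  have hKb : ∀ x, |g x| ≤ K := fun x => le_ciSup hbdd2 x
  have hK0 : 0 ≤ K := Real.iSup_nonneg fun x => abs_nonneg _
  -- integrability over π
  have hIhπ : Integrable h π := integrable_of_bound' π h hmeas M hM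
  have hIh2π : Integrable (fun x => h x ^ 2) π := by
    refine integrable_of_bound' π _ (hmeas.pow_const 2) (M ^ 2) (fun x => ?_)
    rw [abs_pow]
    exact pow_le_pow_left₀ (abs_nonneg _) (hM x) 2
  have hgπ : ∫ x, g x ∂π = 0 := by
    rw [hg]
    rw [integral_sub hIhπ (integrable_const _), integral_const]
    simp [hc]
  have hIgπ2 : Integrable (fun x => g x ^ 2) π := by
    refine integrable_of_bound' π _ (hgm.pow_const 2) (K ^ 2) (fun x => ?_)
    rw [abs_pow]
    exact pow_le_pow_left₀ (abs_nonneg _) (hKb x) 2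
  have hIgμ2 : Integrable (fun x => g x ^ 2) μ := by
    refine integrable_of_bound' μ _ (hgm.pow_const 2) (K ^ 2) (fun x => ?_)
    rw [abs_pow]
    exact pow_le_pow_left₀ (abs_nonneg _) (hKb x) 2
  -- π-side identity
  have hπside : (∫ x, h x ^ 2 ∂π) - c ^ 2 = ∫ x, g x ^ 2 ∂π := by
    have hfun : (fun x => g x ^ 2) = fun x => h x ^ 2 - 2 * c * h x + c ^ 2 := by
      funext x; rw [hg]; ring
    rw [hfun, integral_add, integral_sub, integral_const_mul, integral_const]
    · simp [← hc]
      ring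
    · exact hIh2π
    · exact hIhπ.const_mul _
    · exact hIh2π.sub (hIhπ.const_mul _)
    · exact integrable_const _
  -- transfer integrals along the map
  have hmap : ∀ f : X → ℝ, Measurable f → ∫ ω, f (Xb ω) ∂P = ∫ x, f x ∂μ := by
    intro f hf
    rw [← hμ, integral_map hXb.aemeasurable hf.aestronglyMeasurable]
  set A : Ω → ℝ := fun ω => g (Xb ω) with hA
  have hAm : Measurable A := hgm.comp hXb
  have hAb : ∀ ω, |A ω| ≤ K := fun ω => hKb (Xb ω)
  have hA2 : MemLp A 2 P :=
    (memLp_top_of_bound hAm.aestronglyMeasurable K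
      (ae_of_all _ fun ω => by simpa using hAb ω)).mono_exponent le_top
  have hIA : Integrable A P := integrable_of_bound' P A hAm K hAb
  have hIA2 : Integrable (fun ω => A ω ^ 2) P := by
    have := hA2.integrable_sq; simpa using this
  have hIV : Integrable V P := hV.integrable one_le_two
  have hIV2 : Integrable (fun ω => V ω ^ 2) P := by
    have := hV.integrable_sq; simpa using this
  have hIAV : Integrable (fun ω => A ω * V ω) P :=
    hIV.bdd_mul hAm.aestronglyMeasurable (c := K) (ae_of_all _ fun ω => by simpa using hAb ω)
  -- abbreviations
  set a := ∫ ω, A ω ∂P with ha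
  set m := ∫ ω, V ω ∂P with hm
  set q := ∫ ω, V ω ^ 2 ∂P with hq
  set iAV := ∫ ω, A ω * V ω ∂P with hiAV
  set xμ := ∫ ω, A ω ^ 2 ∂P with hxμ
  -- identify with μ-integrals
  have haμ : a = ∫ x, g x ∂μ := hmap g hgm
  have hxμμ : xμ = ∫ x, g x ^ 2 ∂μ := hmap (fun x => g x ^ 2) (hgm.pow_const 2)
  -- memℒp of Z
  have hZ2 : MemLp (fun ω => h (Xb ω) + V ω) 2 P := by
    have hfun : (fun ω => h (Xb ω) + V ω) = fun ω => (A ω + c) + V ω := by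
      funext ω; rw [hA, hg]; ring
    rw [hfun]
    exact (hA2.add (memLp_const c)).add hV
  -- expectation of Z
  have hZint : ∫ ω, (h (Xb ω) + V ω) ∂P = a + m + c := by
    have hfun : (fun ω => h (Xb ω) + V ω) = fun ω => (A ω + V ω) + c := by
      funext ω; rw [hA, hg]; ring
    rw [hfun, integral_add, integral_add, integral_const]
    · simp [← ha, ← hm]
    · exact hIA
    · exact hIV
    · exact hIA.add hIV
    · exact integrable_const _
  -- second moment of Z
  have hZ2int : ∫ ω, (h (Xb ω) + V ω) ^ 2 ∂P
      = xμ + q + 2 * iAV + (2 * c * a + 2 * c * m + c ^ 2) := by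
    have hfun : (fun ω => (h (Xb ω) + V ω) ^ 2)
        = fun ω => (A ω ^ 2 + V ω ^ 2 + 2 * (A ω * V ω))
          + (2 * c * A ω + (2 * c * V ω + c ^ 2)) := by
      funext ω; rw [hA, hg]; ring
    rw [hfun, integral_add, integral_add, integral_add, integral_add, integral_add,
      integral_const_mul, integral_const_mul, integral_const_mul, integral_const]
    · simp only [measure_univ, ENNReal.toReal_one, smul_eq_mul, one_mul, probReal_univ, mul_one]
      ring
    all_goals first
      | exact hIA2
      | exact hIV2
      | exact hIA2.add hIV2
      | exact hIAV.const_mul 2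
      | exact hIV.const_mul (2 * c)
      | exact integrable_const _
      | exact hIA.const_mul (2 * c)
      | exact (hIV.const_mul (2 * c)).add (integrable_const _)
      | exact (hIA2.add hIV2).add (hIAV.const_mul 2)
      | exact (hIA.const_mul (2 * c)).add ((hIV.const_mul (2 * c)).add (integrable_const _))
  -- variance formula
  have hvar : variance (fun ω => h (Xb ω) + V ω) P = xμ + q + 2 * iAV - (a + m) ^ 2 := by
    rw [variance_eq_sub hZ2]
    simp only [Pi.pow_apply]
    rw [hZ2int, hZint]
    ring
  -- key inequalities
  have hcore : (∫ x, g x ^ 2 ∂π) - (∫ x, g x ^ 2 ∂μ) + (∫ x, g x ∂μ) ^ 2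
      ≤ K ^ 2 * tvDist μ π := core_ineq μ π g hgm K hKb hgπ
  have hdiff : |(∫ x, g x ^ 2 ∂μ) - ∫ x, g x ^ 2 ∂π| ≤ K ^ 2 * tvDist μ π :=
    sq_integral_diff_le μ π g hgm K hK0 hKb
  -- bounds on moments
  have hxμK : xμ ≤ K ^ 2 := by
    rw [hxμμ]
    calc ∫ x, g x ^ 2 ∂μ ≤ ∫ _x, K ^ 2 ∂μ := by
          apply integral_mono hIgμ2 (integrable_const _)
          intro x
          show g x ^ 2 ≤ K ^ 2
          have := pow_le_pow_left₀ (abs_nonneg (g x)) (hKb x) 2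
          rwa [sq_abs] at this
    _ = K ^ 2 := by simp
  have hq0 : 0 ≤ q := by rw [hq]; exact integral_nonneg fun ω => sq_nonneg _
  have hsq0 : 0 ≤ Real.sqrt q := Real.sqrt_nonneg _
  have htv0 : 0 ≤ tvDist μ π := tvDist_nonneg μ π
  -- centered second moments
  have hAcent : ∫ ω, (A ω - a) ^ 2 ∂P = xμ - a ^ 2 := by
    have hfun : (fun ω => (A ω - a) ^ 2) = fun ω => A ω ^ 2 - 2 * a * A ω + a ^ 2 := by
      funext ω; ring
    rw [hfun, integral_add, integral_sub, integral_const_mul, integral_const]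
    · simp only [measure_univ, ENNReal.toReal_one, smul_eq_mul, one_mul, probReal_univ, mul_one]
      ring
    · exact hIA2
    · exact hIA.const_mul _
    · exact hIA2.sub (hIA.const_mul _)
    · exact integrable_const _
  have hVcent : ∫ ω, (V ω - m) ^ 2 ∂P = q - m ^ 2 := by
    have hfun : (fun ω => (V ω - m) ^ 2) = fun ω => V ω ^ 2 - 2 * m * V ω + m ^ 2 := by
      funext ω; ring
    rw [hfun, integral_add, integral_sub, integral_const_mul, integral_const]
    · simp only [measure_univ, ENNReal.toReal_one, smul_eq_mul, one_mul, probReal_univ, mul_one]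
      ring
    · exact hIV2
    · exact hIV.const_mul _
    · exact hIV2.sub (hIV.const_mul _)
    · exact integrable_const _
  have hqm : m ^ 2 ≤ q := by
    have h0 : 0 ≤ ∫ ω, (V ω - m) ^ 2 ∂P := integral_nonneg fun ω => sq_nonneg _
    linarith [hVcent]
  have haJ : a ^ 2 ≤ xμ := by
    have h0 : 0 ≤ ∫ ω, (A ω - a) ^ 2 ∂P := integral_nonneg fun ω => sq_nonneg _
    linarith [hAcent]
  -- covariance bound via Cauchy–Schwarz
  have hcov : |iAV - a * m| ≤ K * Real.sqrt q := by
    have hCS := cauchy_schwarz_int (hA2.sub (memLp_const a)) (hV.sub (memLp_const m))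
      (ν := P)
    simp only [Pi.sub_apply] at hCS
    have hcovint : ∫ ω, (A ω - a) * (V ω - m) ∂P = iAV - a * m := by
      have hfun : (fun ω => (A ω - a) * (V ω - m))
          = fun ω => A ω * V ω - m * A ω - a * V ω + a * m := by
        funext ω; ring
      rw [hfun, integral_add, integral_sub, integral_sub, integral_const_mul,
        integral_const_mul, integral_const]
      · simp only [measure_univ, ENNReal.toReal_one, smul_eq_mul, one_mul, probReal_univ, mul_one]
        ring
      · exact hIAV
      · exact hIA.const_mul _
      · exact hIAV.sub (hIA.const_mul _)
      · exact hIV.const_mul _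
      · exact (hIAV.sub (hIA.const_mul _)).sub (hIV.const_mul _)
      · exact integrable_const _
    rw [hcovint, hAcent, hVcent] at hCS
    calc |iAV - a * m| ≤ Real.sqrt (xμ - a ^ 2) * Real.sqrt (q - m ^ 2) := hCS
    _ ≤ K * Real.sqrt q := by
        apply mul_le_mul
        · calc Real.sqrt (xμ - a ^ 2) ≤ Real.sqrt (K ^ 2) := by
                apply Real.sqrt_le_sqrt; nlinarith
          _ = K := Real.sqrt_sq hK0
        · apply Real.sqrt_le_sqrt; nlinarith
        · exact Real.sqrt_nonneg _
        · exact hK0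
  have hAV : |iAV| ≤ K * Real.sqrt q := by
    have hCS := cauchy_schwarz_int hA2 hV (ν := P)
    rw [← hxμ, ← hq] at hCS
    calc |iAV| ≤ Real.sqrt xμ * Real.sqrt q := hCS
    _ ≤ K * Real.sqrt q := by
        apply mul_le_mul_of_nonneg_right ?_ hsq0
        calc Real.sqrt xμ ≤ Real.sqrt (K ^ 2) := Real.sqrt_le_sqrt hxμK
        _ = K := Real.sqrt_sq hK0
  -- assemble
  rw [hvar, hπside]
  rw [abs_le]
  have hexp : (a + m) ^ 2 = a ^ 2 + 2 * (a * m) + m ^ 2 := by ring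
  have hd1 := abs_le.1 hdiff
  have hc1 := abs_le.1 hcov
  have hAV1 := abs_le.1 hAV
  rw [← haμ, ← hxμμ] at hcore
  rw [← hxμμ] at hdiff
  constructor
  · nlinarith [sq_nonneg (a + m)]
  · nlinarith
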